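/- Let F be a field, let d be a natural number, let P be a polynomial over F of degree at most d, let S be a finite set of elements of F (distinct evaluation points), and let y : F → F be a received word. Let g be the number of x ∈ S with y(x) = P(x) and let b = |S| − g. If g > b + d, then for every polynomial Q over F of degree at most d with Q ≠ P, the number of x ∈ S with y(x) = Q(x) is strictly less than g. In particular, P is the unique polynomial of degree at most d that agrees with the received word on the largest number of points of S. -/
import Mathlib


open Polynomial

/-- Unique decoding of Reed–Solomon codes (Berlekamp–Welch guarantee).
Let `P` be a polynomial of degree at most `d` over a field `F`, let `S` be a
finite set of evaluation points, and let `y : F → F` be the received word.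
If `g` is the number of points of `S` where `y` agrees with `P` and
`b = |S| − g`, and `g > b + d`, then every other polynomial `Q ≠ P` of degree
at most `d` agrees with `y` on strictly fewer than `g` points of `S`. -/
theorem stmt_4 {F : Type*} [Field F] [DecidableEq F] (d : ℕ)
    (P : Polynomial F) (hP : P.natDegree ≤ d) (S : Finset F) (y : F → F)
    (g b : ℕ)
    (hg : g = (S.filter (fun x => y x = P.eval x)).card)
    (hb : b = S.card - g)
    (hgb : g > b + d) :
    ∀ Q : Polynomial F, Q.natDegree ≤ d → Q ≠ P →
      (S.filter (fun x => y x = Q.eval x)).card < g := by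
  intro Q hQ hQP
  set A := S.filter (fun x => y x = P.eval x) with hA
  set B := S.filter (fun x => y x = Q.eval x) with hB
  have hPQ : P - Q ≠ 0 := sub_ne_zero.mpr (fun h => hQP h.symm)
  -- points in A ∩ B are roots of P - Q
  have hsub : A ∩ B ⊆ (P - Q).roots.toFinset := by
    intro x hx
    simp only [Finset.mem_inter, hA, hB, Finset.mem_filter] at hx
    rw [Multiset.mem_toFinset, Polynomial.mem_roots hPQ]
    simp only [Polynomial.IsRoot, Polynomial.eval_sub]
    rw [← hx.1.2, ← hx.2.2]
    ring
  have hcard_int : (A ∩ B).card ≤ d := by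
    calc (A ∩ B).card ≤ (P - Q).roots.toFinset.card := Finset.card_le_card hsub
      _ ≤ Multiset.card (P - Q).roots := Multiset.toFinset_card_le _
      _ ≤ (P - Q).natDegree := Polynomial.card_roots' _
      _ ≤ d := le_trans (Polynomial.natDegree_sub_le _ _) (max_le hP hQ)
  have hBdiff : (B \ A).card ≤ S.card - g := by
    have h1 : B \ A ⊆ S \ A := by
      intro x hx
      rw [Finset.mem_sdiff] at hx ⊢
      exact ⟨Finset.mem_of_mem_filter _ hx.1, hx.2⟩
    calc (B \ A).card ≤ (S \ A).card := Finset.card_le_card h1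
      _ = S.card - A.card := Finset.card_sdiff_of_subset (Finset.filter_subset _ _)
      _ = S.card - g := by rw [hg]
  calc B.card = (B \ A).card + (B ∩ A).card := (Finset.card_sdiff_add_card_inter B A).symm
    _ ≤ (S.card - g) + d := add_le_add hBdiff (by rwa [Finset.inter_comm] at hcard_int)
    _ = b + d := by rw [hb]
    _ < g := hgb
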